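/- arXiv:2310.19244 — 4 statements merged into one kernel-verified Lean document; each statement's English description precedes it below -/
import Mathlib

section
/- (Incoherence implies a restricted eigenvalue bound.) Fix a positive integer k ≤ d and let 𝕏 be an n×d matrix satisfying the incoherence condition INC(k): every entry of the matrix 𝕏ᵀ𝕏/n − I_d has absolute value at most 1/(32k). Then for any subset S ⊂ {1,…,d} with |S| ≤ k and any θ ∈ ℝ^d satisfying the cone condition |θ_{S^c}|₁ ≤ 3|θ_S|₁, it holds that |θ|₂² ≤ 2|𝕏θ|₂²/n. -/
open Matrix

/-- Incoherence implies a restricted eigenvalue bound: if `|AᵀA/n − I|_∞ ≤ 1/(32k)`,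
then for any `S` with `|S| ≤ k` and any `θ` satisfying the cone condition
`|θ_{Sᶜ}|₁ ≤ 3|θ_S|₁`, one has `|θ|₂² ≤ 2|Aθ|₂²/n`. -/
theorem incoherence_restricted_eigenvalue
    {n d k : ℕ} (hn : 0 < n) (hk : 0 < k) (hkd : k ≤ d)
    (A : Matrix (Fin n) (Fin d) ℝ)
    (hinc : ∀ a b, |(Aᵀ * A) a b / n - (1 : Matrix (Fin d) (Fin d) ℝ) a b| ≤
      1 / (32 * k))
    (S : Finset (Fin d)) (hS : S.card ≤ k)
    (θ : Fin d → ℝ)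
    (hcone : ∑ j ∈ Sᶜ, |θ j| ≤ 3 * ∑ j ∈ S, |θ j|) :
    ∑ j, θ j ^ 2 ≤ 2 * (∑ i, (A.mulVec θ i) ^ 2) / n := by
  set T := ∑ j, θ j ^ 2 with hT
  set X := ∑ i, (A.mulVec θ i) ^ 2 with hX
  have hn' : (0:ℝ) < n := by exact_mod_cast hn
  have hk' : (0:ℝ) < k := by exact_mod_cast hk
  have hAA : ∀ j j', (Aᵀ * A) j j' = ∑ i, A i j * A i j' := fun j j' => by
    simp [Matrix.mul_apply, Matrix.transpose_apply]
  have hX2 : X = ∑ j, ∑ j', θ j * θ j' * (Aᵀ * A) j j' := by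
    simp only [hX, Matrix.mulVec, dotProduct, sq, Finset.sum_mul_sum, hAA]
    rw [Finset.sum_comm]
    refine Finset.sum_congr rfl fun j _ => ?_
    rw [Finset.sum_comm]
    refine Finset.sum_congr rfl fun j' _ => ?_
    rw [Finset.mul_sum]
    exact Finset.sum_congr rfl fun i _ => by ring
  have hI : ∑ j, ∑ j', θ j * θ j' * (1 : Matrix (Fin d) (Fin d) ℝ) j j' = T := by
    simp [Matrix.one_apply, mul_ite, Finset.sum_ite_eq', hT, sq]
  have key : X / n = T + ∑ j, ∑ j', θ j * θ j' *
      ((Aᵀ * A) j j' / n - (1 : Matrix (Fin d) (Fin d) ℝ) j j') := by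
    rw [hX2]
    rw [← hI]
    rw [Finset.sum_div]
    rw [← Finset.sum_add_distrib]
    refine Finset.sum_congr rfl fun j _ => ?_
    rw [Finset.sum_div, ← Finset.sum_add_distrib]
    refine Finset.sum_congr rfl fun j' _ => ?_
    field_simp
    ring
  set L := ∑ j, |θ j| with hL
  have hQ : |∑ j, ∑ j', θ j * θ j' *
      ((Aᵀ * A) j j' / n - (1 : Matrix (Fin d) (Fin d) ℝ) j j')| ≤ L^2 / (32*k) := by
    calc |∑ j, ∑ j', θ j * θ j' * ((Aᵀ * A) j j' / n - (1 : Matrix (Fin d) (Fin d) ℝ) j j')|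
        ≤ ∑ j, ∑ j', |θ j * θ j' * ((Aᵀ * A) j j' / n - (1 : Matrix (Fin d) (Fin d) ℝ) j j')| := by
          refine (Finset.abs_sum_le_sum_abs _ _).trans ?_
          exact Finset.sum_le_sum fun j _ => Finset.abs_sum_le_sum_abs _ _
      _ ≤ ∑ j, ∑ j', |θ j| * |θ j'| * (1 / (32*k)) := by
          refine Finset.sum_le_sum fun j _ => Finset.sum_le_sum fun j' _ => ?_
          rw [abs_mul, abs_mul]
          exact mul_le_mul_of_nonneg_left (hinc j j') (by positivity)
      _ = L^2 / (32*k) := by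
          simp_rw [← Finset.sum_mul]
          rw [← Finset.sum_mul_sum, ← hL]; ring
  have hLS : L ≤ 4 * ∑ j ∈ S, |θ j| := by
    have := Finset.sum_add_sum_compl S (fun j => |θ j|)
    rw [hL]; linarith
  have hCS : (∑ j ∈ S, |θ j|)^2 ≤ k * T := by
    calc (∑ j ∈ S, |θ j|)^2 ≤ S.card * ∑ j ∈ S, |θ j| ^ 2 :=
          sq_sum_le_card_mul_sum_sq
      _ ≤ k * T := by
          refine mul_le_mul ?_ ?_ (by positivity) (by positivity)
          · exact_mod_cast hS
          · rw [hT]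
            refine Finset.sum_le_sum_of_subset_of_nonneg (Finset.subset_univ S)
              (fun j _ _ => by positivity) |>.trans_eq ?_
            exact Finset.sum_congr rfl fun j _ => by rw [sq_abs]
  have hL2 : L^2 ≤ 16 * k * T := by
    have h0 : (0:ℝ) ≤ ∑ j ∈ S, |θ j| := by positivity
    nlinarith [hLS, hCS, Finset.sum_nonneg (fun j (_ : j ∈ Finset.univ) => abs_nonneg (θ j))]
  have hQT : L^2 / (32*k) ≤ T / 2 := by
    rw [div_le_div_iff₀ (by positivity) (by norm_num)]
    nlinarith
  have : T / 2 ≤ X / n := by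
    have := abs_le.mp hQ
    linarith [key, this.1]
  rw [mul_div_assoc]
  linarith
end

section
/- (Maurey's argument.) Let φ₁, …, φ_M ∈ ℝⁿ be vectors normalized so that max_{1≤j≤M} |φⱼ|₂ ≤ D√n, and for θ ∈ ℝ^M write φ_θ = Σⱼ θⱼ φⱼ. Then for any f ∈ ℝⁿ, any integer k with 1 ≤ k ≤ M and any R > 0: min over θ ∈ ℝ^M with |θ|₀ ≤ k of (1/n)|φ_θ − f|₂² is at most [min over θ ∈ ℝ^M with |θ|₁ ≤ R of (1/n)|φ_θ − f|₂²] + D²R²/k. -/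
open Classical in
/-- The number of nonzero coordinates (the "ℓ₀ norm") of a vector. -/
noncomputable def sparsity {M : ℕ} (θ : Fin M → ℝ) : ℕ :=
  (Finset.univ.filter fun j => θ j ≠ 0).card

lemma sum_prod_swap {k M : ℕ} (h : Fin k → Fin M → ℝ) :
    ∑ g : Fin k → Fin M, ∏ i, h i (g i) = ∏ i, ∑ j, h i j :=
  (Fintype.prod_sum h).symm

lemma factor1 {k M : ℕ} (p a : Fin M → ℝ) (hp : ∑ j, p j = 1) (i : Fin k) :
    ∑ g : Fin k → Fin M, (∏ i', p (g i')) * a (g i) = ∑ j, p j * a j := by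
  calc ∑ g : Fin k → Fin M, (∏ i', p (g i')) * a (g i)
      = ∑ g : Fin k → Fin M, ∏ i', (p (g i') * (if i' = i then a (g i') else 1)) := by
        refine Finset.sum_congr rfl fun g _ => ?_
        rw [Finset.prod_mul_distrib, Finset.prod_ite_eq']
        simp
    _ = ∏ i', ∑ j, p j * (if i' = i then a j else 1) :=
        sum_prod_swap (fun i' j => p j * (if i' = i then a j else 1))
    _ = ∏ i' : Fin k, (if i' = i then (∑ j, p j * a j) else 1) := by
        refine Finset.prod_congr rfl fun i' _ => ?_
        by_cases h : i' = i <;> simp [h, hp]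
    _ = ∑ j, p j * a j := by rw [Finset.prod_ite_eq']; simp

lemma factor2 {k M : ℕ} (p a b : Fin M → ℝ) (hp : ∑ j, p j = 1) {i i' : Fin k} (hii : i ≠ i') :
    ∑ g : Fin k → Fin M, (∏ i'', p (g i'')) * (a (g i) * b (g i'))
      = (∑ j, p j * a j) * (∑ j, p j * b j) := by
  calc ∑ g : Fin k → Fin M, (∏ i'', p (g i'')) * (a (g i) * b (g i'))
      = ∑ g : Fin k → Fin M, ∏ i'',
          (p (g i'') * ((if i'' = i then a (g i'') else 1) * (if i'' = i' then b (g i'') else 1))) := by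
        refine Finset.sum_congr rfl fun g _ => ?_
        rw [Finset.prod_mul_distrib, Finset.prod_mul_distrib, Finset.prod_ite_eq',
          Finset.prod_ite_eq']
        simp
    _ = ∏ i'', ∑ j, p j * ((if i'' = i then a j else 1) * (if i'' = i' then b j else 1)) :=
        sum_prod_swap (fun i'' j => p j * ((if i'' = i then a j else 1) * (if i'' = i' then b j else 1)))
    _ = ∏ i'' : Fin k,
          ((if i'' = i then (∑ j, p j * a j) else 1) * (if i'' = i' then (∑ j, p j * b j) else 1)) := by
        refine Finset.prod_congr rfl fun i'' _ => ?_
        by_cases h1 : i'' = i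
        · subst h1
          simp [hii, hp]
        · by_cases h2 : i'' = i' <;> simp [h1, h2, hp, hii.symm]
    _ = (∑ j, p j * a j) * (∑ j, p j * b j) := by
        rw [Finset.prod_mul_distrib, Finset.prod_ite_eq', Finset.prod_ite_eq']
        simp

lemma weights_sum_one {k M : ℕ} (p : Fin M → ℝ) (hp : ∑ j, p j = 1) :
    ∑ g : Fin k → Fin M, (∏ i, p (g i)) = 1 := by
  rw [sum_prod_swap (fun _ j => p j)]
  simp [hp]

lemma maurey_scalar {k M : ℕ} (hk : 1 ≤ k) (p x : Fin M → ℝ) (hp : ∑ j, p j = 1) (c : ℝ) :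
    ∑ g : Fin k → Fin M, (∏ i, p (g i)) * ((1 / k : ℝ) * (∑ i, x (g i)) - c) ^ 2
      = ((∑ j, p j * x j) - c) ^ 2
        + (1 / k : ℝ) * ((∑ j, p j * x j ^ 2) - (∑ j, p j * x j) ^ 2) := by
  have hk0 : (k : ℝ) ≠ 0 := Nat.cast_ne_zero.mpr (by omega)
  set m := ∑ j, p j * x j with hm
  set q := ∑ j, p j * x j ^ 2 with hq
  have h0 : ∑ g : Fin k → Fin M, (∏ i, p (g i)) = 1 := weights_sum_one p hp
  have h1 : ∑ g : Fin k → Fin M, (∏ i, p (g i)) * (∑ i, x (g i)) = (k : ℝ) * m := by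
    calc ∑ g : Fin k → Fin M, (∏ i, p (g i)) * (∑ i, x (g i))
        = ∑ g : Fin k → Fin M, ∑ i, (∏ i', p (g i')) * x (g i) := by
          refine Finset.sum_congr rfl fun g _ => ?_; rw [Finset.mul_sum]
      _ = ∑ i : Fin k, ∑ g : Fin k → Fin M, (∏ i', p (g i')) * x (g i) := Finset.sum_comm
      _ = ∑ _i : Fin k, m := Finset.sum_congr rfl fun i _ => factor1 p x hp i
      _ = (k : ℝ) * m := by simp [mul_comm]
  have h2 : ∑ g : Fin k → Fin M, (∏ i, p (g i)) * (∑ i, x (g i)) ^ 2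
      = (k : ℝ) * q + ((k : ℝ) ^ 2 - k) * m ^ 2 := by
    calc ∑ g : Fin k → Fin M, (∏ i, p (g i)) * (∑ i, x (g i)) ^ 2
        = ∑ g : Fin k → Fin M, ∑ i, ∑ i', (∏ i'', p (g i'')) * (x (g i) * x (g i')) := by
          refine Finset.sum_congr rfl fun g _ => ?_
          rw [sq, Finset.sum_mul_sum]
          rw [Finset.mul_sum]
          refine Finset.sum_congr rfl fun i _ => ?_
          rw [Finset.mul_sum]
      _ = ∑ i : Fin k, ∑ i' : Fin k, ∑ g : Fin k → Fin M,
            (∏ i'', p (g i'')) * (x (g i) * x (g i')) := by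
          rw [Finset.sum_comm]
          exact Finset.sum_congr rfl fun i _ => Finset.sum_comm
      _ = ∑ i : Fin k, ∑ i' : Fin k, (if i = i' then q else m ^ 2) := by
          refine Finset.sum_congr rfl fun i _ => Finset.sum_congr rfl fun i' _ => ?_
          by_cases h : i = i'
          · subst h
            rw [if_pos rfl, hq, ← factor1 p (fun j => x j ^ 2) hp i]
            exact Finset.sum_congr rfl fun g _ => by rw [← sq]
          · rw [if_neg h, sq, hm, factor2 p x x hp h]
      _ = (k : ℝ) * q + ((k : ℝ) ^ 2 - k) * m ^ 2 := by
          have row : ∀ i : Fin k, ∑ i' : Fin k, (if i = i' then q else m ^ 2)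
              = (k : ℝ) * m ^ 2 + (q - m ^ 2) := by
            intro i
            have step : ∀ i' : Fin k, (if i = i' then q else m ^ 2)
                = m ^ 2 + (if i = i' then q - m ^ 2 else 0) := by
              intro i'; split <;> ring
            rw [Finset.sum_congr rfl fun i' _ => step i', Finset.sum_add_distrib,
              Finset.sum_const, Finset.sum_ite_eq]
            simp
          rw [Finset.sum_congr rfl fun i _ => row i, Finset.sum_const]
          simp
          ring
  have expand : ∀ g : Fin k → Fin M,
      (∏ i, p (g i)) * ((1 / k : ℝ) * (∑ i, x (g i)) - c) ^ 2
        = (1 / k : ℝ) ^ 2 * ((∏ i, p (g i)) * (∑ i, x (g i)) ^ 2)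
          - (2 * c / k) * ((∏ i, p (g i)) * (∑ i, x (g i)))
          + c ^ 2 * (∏ i, p (g i)) := by
    intro g; ring
  rw [Finset.sum_congr rfl fun g _ => expand g]
  rw [Finset.sum_add_distrib, Finset.sum_sub_distrib, ← Finset.mul_sum, ← Finset.mul_sum,
    ← Finset.mul_sum, h0, h1, h2]
  field_simp
  ring

lemma sign_mul_abs' (r : ℝ) : Real.sign r * |r| = r := by
  rcases lt_trichotomy r 0 with h | h | h
  · rw [Real.sign_of_neg h, abs_of_neg h]; ring
  · simp [h]
  · rw [Real.sign_of_pos h, abs_of_pos h]; ring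

lemma exists_sparse {n M k : ℕ} (hn : 0 < n) (hk : 1 ≤ k)
    (φ : Fin M → Fin n → ℝ) (D : ℝ)
    (hφ : ∀ j, (∑ i, φ j i ^ 2) ≤ D ^ 2 * n)
    (f : Fin n → ℝ) (θ : Fin M → ℝ) :
    ∃ θ' : Fin M → ℝ, sparsity θ' ≤ k ∧
      (1 / n : ℝ) * ∑ i, ((∑ j, θ' j * φ j i) - f i) ^ 2
        ≤ (1 / n : ℝ) * ∑ i, ((∑ j, θ j * φ j i) - f i) ^ 2
          + D ^ 2 * (∑ j, |θ j|) ^ 2 / k := by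
  classical
  have hk0 : (0 : ℝ) < (k : ℝ) := by exact_mod_cast Nat.lt_of_lt_of_le Nat.zero_lt_one hk
  have hn0 : (0 : ℝ) < (n : ℝ) := by exact_mod_cast hn
  set T := ∑ j, |θ j| with hTdef
  have hT0 : 0 ≤ T := Finset.sum_nonneg fun j _ => abs_nonneg _
  by_cases hT : T = 0
  · -- θ = 0, use θ itself
    have hz : ∀ j, θ j = 0 := by
      intro j
      have := (Finset.sum_eq_zero_iff_of_nonneg (fun j _ => abs_nonneg (θ j))).mp hT j
        (Finset.mem_univ j)
      exact abs_eq_zero.mp this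
    refine ⟨θ, ?_, ?_⟩
    · have : (Finset.univ.filter fun j => θ j ≠ 0) = ∅ := by
        refine Finset.filter_eq_empty_iff.mpr fun j _ => by simp [hz j]
      simp [sparsity, this]
    · have : D ^ 2 * T ^ 2 / k = 0 := by rw [hT]; ring
      rw [this]
      simp
  · have hTpos : 0 < T := lt_of_le_of_ne hT0 (Ne.symm hT)
    set p : Fin M → ℝ := fun j => |θ j| / T with hpdef
    have hp0 : ∀ j, 0 ≤ p j := fun j => div_nonneg (abs_nonneg _) hT0
    have hp : ∑ j, p j = 1 := by
      rw [hpdef, ← Finset.sum_div, ← hTdef, div_self hT]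
    have keymul : ∀ j, p j * (T * Real.sign (θ j)) = θ j := by
      intro j
      have hs := sign_mul_abs' (θ j)
      rw [hpdef]
      field_simp
      linear_combination hs
    set x : Fin n → Fin M → ℝ := fun i j => T * Real.sign (θ j) * φ j i with hxdef
    set W : (Fin k → Fin M) → ℝ := fun g => ∏ i', p (g i') with hWdef
    have hW0 : ∀ g, 0 ≤ W g := fun g => Finset.prod_nonneg fun i _ => hp0 _
    have hWsum : ∑ g : Fin k → Fin M, W g = 1 := weights_sum_one p hp
    set θ' : (Fin k → Fin M) → Fin M → ℝ :=
      fun g j => (T / k) * ∑ i' : Fin k, (if g i' = j then Real.sign (θ j) else 0) with hθ'def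
    -- sparsity bound
    have hsp : ∀ g : Fin k → Fin M, sparsity (θ' g) ≤ k := by
      intro g
      have hsub : (Finset.univ.filter fun j => θ' g j ≠ 0) ⊆ Finset.univ.image g := by
        intro j hj
        rw [Finset.mem_filter] at hj
        obtain ⟨-, hj⟩ := hj
        have : ∃ i', g i' = j := by
          by_contra hc
          push_neg at hc
          exact hj (by simp [hθ'def, hc])
        obtain ⟨i', hi'⟩ := this
        exact Finset.mem_image.mpr ⟨i', Finset.mem_univ _, hi'⟩
      calc sparsity (θ' g) ≤ (Finset.univ.image g).card := by
            unfold sparsity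
            convert Finset.card_le_card hsub using 2
        _ ≤ (Finset.univ : Finset (Fin k)).card := Finset.card_image_le
        _ = k := by simp
    -- reconstruction
    have recon : ∀ (g : Fin k → Fin M) (i : Fin n),
        ∑ j, θ' g j * φ j i = (1 / k : ℝ) * ∑ i', x i (g i') := by
      intro g i
      calc ∑ j, θ' g j * φ j i
          = ∑ j, ∑ i' : Fin k, (T / k) * (if g i' = j then Real.sign (θ j) * φ j i else 0) := by
            refine Finset.sum_congr rfl fun j _ => ?_
            rw [hθ'def]
            simp only
            rw [mul_assoc, Finset.sum_mul, Finset.mul_sum]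
            refine Finset.sum_congr rfl fun i' _ => ?_
            split <;> simp
        _ = ∑ i' : Fin k, ∑ j, (T / k) * (if g i' = j then Real.sign (θ j) * φ j i else 0) :=
            Finset.sum_comm
        _ = ∑ i' : Fin k, (T / k) * (Real.sign (θ (g i')) * φ (g i') i) := by
            refine Finset.sum_congr rfl fun i' _ => ?_
            rw [← Finset.mul_sum, Finset.sum_ite_eq]
            simp
        _ = (1 / k : ℝ) * ∑ i', x i (g i') := by
            rw [Finset.mul_sum]
            refine Finset.sum_congr rfl fun i' _ => ?_
            rw [hxdef]
            ring
    -- per-coordinate averaged identity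
    have hmx : ∀ i : Fin n, ∑ j, p j * x i j = ∑ j, θ j * φ j i := by
      intro i
      refine Finset.sum_congr rfl fun j _ => ?_
      rw [hxdef]
      simp only
      linear_combination (φ j i) * keymul j
    have coord : ∀ i : Fin n,
        ∑ g : Fin k → Fin M, W g * ((1 / k : ℝ) * (∑ i', x i (g i')) - f i) ^ 2
          = ((∑ j, θ j * φ j i) - f i) ^ 2
            + (1 / k : ℝ) * ((∑ j, p j * x i j ^ 2) - (∑ j, θ j * φ j i) ^ 2) := by
      intro i
      have := maurey_scalar hk p (fun j => x i j) hp (f i)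
      rw [hmx i] at this
      exact this
    -- bound on the variance term
    have hs2 : ∀ j, Real.sign (θ j) ^ 2 ≤ 1 := by
      intro j
      rcases Real.sign_apply_eq (θ j) with h | h | h <;> rw [h] <;> norm_num
    have hQ : ∑ i : Fin n, ∑ j, p j * x i j ^ 2 ≤ T ^ 2 * (D ^ 2 * n) := by
      rw [Finset.sum_comm]
      calc ∑ j, ∑ i : Fin n, p j * x i j ^ 2
          = ∑ j, p j * (T ^ 2 * Real.sign (θ j) ^ 2 * ∑ i, φ j i ^ 2) := by
            refine Finset.sum_congr rfl fun j _ => ?_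
            rw [Finset.mul_sum, Finset.mul_sum]
            refine Finset.sum_congr rfl fun i _ => ?_
            rw [hxdef]
            ring
        _ ≤ ∑ j, p j * (T ^ 2 * (D ^ 2 * n)) := by
            refine Finset.sum_le_sum fun j _ => mul_le_mul_of_nonneg_left ?_ (hp0 j)
            have h1 := hφ j
            have h2 : (0:ℝ) ≤ ∑ i, φ j i ^ 2 := Finset.sum_nonneg fun i _ => sq_nonneg _
            nlinarith [mul_nonneg (mul_nonneg (sq_nonneg T) (sub_nonneg.mpr (hs2 j))) h2,
              mul_nonneg (sq_nonneg T) (sub_nonneg.mpr h1)]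
        _ = T ^ 2 * (D ^ 2 * n) := by
            rw [← Finset.sum_mul, hp, one_mul]
    -- the averaged error bound
    set B : ℝ := (1 / n : ℝ) * ∑ i, ((∑ j, θ j * φ j i) - f i) ^ 2 + D ^ 2 * T ^ 2 / k with hBdef
    have havg : ∑ g : Fin k → Fin M,
        W g * ((1 / n : ℝ) * ∑ i, ((∑ j, θ' g j * φ j i) - f i) ^ 2) ≤ B := by
      calc ∑ g : Fin k → Fin M, W g * ((1 / n : ℝ) * ∑ i, ((∑ j, θ' g j * φ j i) - f i) ^ 2)
          = ∑ g : Fin k → Fin M, ∑ i : Fin n,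
              (1 / n : ℝ) * (W g * ((1 / k : ℝ) * (∑ i', x i (g i')) - f i) ^ 2) := by
            refine Finset.sum_congr rfl fun g _ => ?_
            rw [Finset.mul_sum, Finset.mul_sum]
            refine Finset.sum_congr rfl fun i _ => ?_
            rw [recon g i]
            ring
        _ = ∑ i : Fin n, ∑ g : Fin k → Fin M,
              (1 / n : ℝ) * (W g * ((1 / k : ℝ) * (∑ i', x i (g i')) - f i) ^ 2) :=
            Finset.sum_comm
        _ = (1 / n : ℝ) * ∑ i : Fin n, ∑ g : Fin k → Fin M,
              W g * ((1 / k : ℝ) * (∑ i', x i (g i')) - f i) ^ 2 := by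
            rw [Finset.mul_sum]
            exact Finset.sum_congr rfl fun i _ => (Finset.mul_sum _ _ _).symm
        _ = (1 / n : ℝ) * ∑ i : Fin n, (((∑ j, θ j * φ j i) - f i) ^ 2
              + (1 / k : ℝ) * ((∑ j, p j * x i j ^ 2) - (∑ j, θ j * φ j i) ^ 2)) := by
            rw [Finset.sum_congr rfl fun i _ => coord i]
        _ ≤ (1 / n : ℝ) * ∑ i : Fin n, (((∑ j, θ j * φ j i) - f i) ^ 2
              + (1 / k : ℝ) * (∑ j, p j * x i j ^ 2)) := by
            refine mul_le_mul_of_nonneg_left (Finset.sum_le_sum fun i _ => ?_) (by positivity)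
            have h1 : (0:ℝ) ≤ ((∑ j, θ j * φ j i)) ^ 2 := sq_nonneg _
            have h2 : (0:ℝ) ≤ (1 / k : ℝ) := by positivity
            nlinarith
        _ = (1 / n : ℝ) * ∑ i, ((∑ j, θ j * φ j i) - f i) ^ 2
              + (1 / (n * k) : ℝ) * ∑ i : Fin n, ∑ j, p j * x i j ^ 2 := by
            rw [Finset.sum_add_distrib, mul_add, ← Finset.mul_sum]
            field_simp
            try ring
        _ ≤ (1 / n : ℝ) * ∑ i, ((∑ j, θ j * φ j i) - f i) ^ 2
              + (1 / (n * k) : ℝ) * (T ^ 2 * (D ^ 2 * n)) := by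
            have : (0:ℝ) ≤ (1 / (n * k) : ℝ) := by positivity
            nlinarith [hQ]
        _ = B := by
            rw [hBdef]
            field_simp
            try ring
    -- choose a good g
    have hgood : ∃ g : Fin k → Fin M,
        (1 / n : ℝ) * ∑ i, ((∑ j, θ' g j * φ j i) - f i) ^ 2 ≤ B := by
      by_contra hc
      push_neg at hc
      obtain ⟨g₀, hg₀⟩ : ∃ g : Fin k → Fin M, 0 < W g := by
        by_contra hc2
        push_neg at hc2
        have : ∑ g : Fin k → Fin M, W g = 0 :=
          le_antisymm (Finset.sum_nonpos fun g _ => hc2 g) (Finset.sum_nonneg fun g _ => hW0 g)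
        rw [hWsum] at this
        norm_num at this
      have hlt : ∑ g : Fin k → Fin M, W g * B < ∑ g : Fin k → Fin M,
          W g * ((1 / n : ℝ) * ∑ i, ((∑ j, θ' g j * φ j i) - f i) ^ 2) := by
        refine Finset.sum_lt_sum (fun g _ => mul_le_mul_of_nonneg_left (hc g).le (hW0 g))
          ⟨g₀, Finset.mem_univ _, mul_lt_mul_of_pos_left (hc g₀) hg₀⟩
      rw [← Finset.sum_mul, hWsum, one_mul] at hlt
      exact absurd havg (not_le.mpr hlt)
    obtain ⟨g, hg⟩ := hgood
    exact ⟨θ' g, hsp g, hg⟩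

/-- Maurey's argument: for a dictionary normalized by `max_j |φ_j|₂ ≤ D√n`, the best
`k`-sparse approximation error is at most the best approximation error over the
`ℓ₁`-ball of radius `R`, plus `D²R²/k`. -/
theorem maurey_argument
    {n M : ℕ} (hn : 0 < n) {k : ℕ} (hk : 1 ≤ k) (hkM : k ≤ M)
    (φ : Fin M → Fin n → ℝ) (D : ℝ)
    (hD : ∀ j, Real.sqrt (∑ i, φ j i ^ 2) ≤ D * Real.sqrt (n : ℝ))
    (f : Fin n → ℝ) (R : ℝ) (hR : 0 < R) :
    sInf {y : ℝ | ∃ θ : Fin M → ℝ, sparsity θ ≤ k ∧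
        y = (1 / n : ℝ) * ∑ i, ((∑ j, θ j * φ j i) - f i) ^ 2} ≤
      sInf {y : ℝ | ∃ θ : Fin M → ℝ, (∑ j, |θ j|) ≤ R ∧
        y = (1 / n : ℝ) * ∑ i, ((∑ j, θ j * φ j i) - f i) ^ 2} +
        D ^ 2 * R ^ 2 / k := by
  have hk0 : (0 : ℝ) < (k : ℝ) := by exact_mod_cast Nat.lt_of_lt_of_le Nat.zero_lt_one hk
  set S₁ : Set ℝ := {y : ℝ | ∃ θ : Fin M → ℝ, sparsity θ ≤ k ∧
      y = (1 / n : ℝ) * ∑ i, ((∑ j, θ j * φ j i) - f i) ^ 2} with hS₁def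
  set S₂ : Set ℝ := {y : ℝ | ∃ θ : Fin M → ℝ, (∑ j, |θ j|) ≤ R ∧
      y = (1 / n : ℝ) * ∑ i, ((∑ j, θ j * φ j i) - f i) ^ 2} with hS₂def
  have hφ : ∀ j, (∑ i, φ j i ^ 2) ≤ D ^ 2 * n := by
    intro j
    have h0 : (0:ℝ) ≤ ∑ i, φ j i ^ 2 := Finset.sum_nonneg fun i _ => sq_nonneg _
    have h1 := hD j
    have h2 := Real.sq_sqrt h0
    have h3 := Real.sq_sqrt (by positivity : (0:ℝ) ≤ (n:ℝ))
    have h4 := Real.sqrt_nonneg (∑ i, φ j i ^ 2)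
    have h5 := Real.sqrt_nonneg (n:ℝ)
    nlinarith [sq_nonneg (D * Real.sqrt (n:ℝ) - Real.sqrt (∑ i, φ j i ^ 2))]
  have hbdd : BddBelow S₁ := by
    refine ⟨0, fun y hy => ?_⟩
    obtain ⟨θ, -, rfl⟩ := hy
    positivity
  have hS2ne : S₂.Nonempty := by
    refine ⟨(1 / n : ℝ) * ∑ i, ((∑ j, (0 : Fin M → ℝ) j * φ j i) - f i) ^ 2, 0, ?_, rfl⟩
    simpa using hR.le
  have key : ∀ y ∈ S₂, sInf S₁ ≤ y + D ^ 2 * R ^ 2 / k := by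
    rintro y ⟨θ, hθR, rfl⟩
    obtain ⟨θ', hsp, herr⟩ := exists_sparse hn hk φ D hφ f θ
    have hmem : (1 / n : ℝ) * ∑ i, ((∑ j, θ' j * φ j i) - f i) ^ 2 ∈ S₁ := ⟨θ', hsp, rfl⟩
    have h1 := csInf_le hbdd hmem
    have hT0 : (0:ℝ) ≤ ∑ j, |θ j| := Finset.sum_nonneg fun j _ => abs_nonneg _
    have hT2 : (∑ j, |θ j|) ^ 2 ≤ R ^ 2 := by nlinarith
    have h2 : D ^ 2 * (∑ j, |θ j|) ^ 2 / k ≤ D ^ 2 * R ^ 2 / k := by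
      gcongr
    linarith
  have hlow : sInf S₁ - D ^ 2 * R ^ 2 / k ≤ sInf S₂ :=
    le_csInf hS2ne fun y hy => by linarith [key y hy]
  linarith
end

section
/- (Sparse Varshamov–Gilbert lemma.) For any two integers k and d with 1 ≤ k ≤ d/8, there exist binary vectors ω₁, …, ω_M ∈ {0,1}^d such that: (i) the Hamming distance satisfies ρ(ωᵢ, ωⱼ) ≥ k/2 for all i ≠ j; (ii) log M ≥ (k/8) log(1 + d/(2k)); and (iii) each ωⱼ has exactly k nonzero coordinates, i.e., |ωⱼ|₀ = k. -/
open Finset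
set_option maxHeartbeats 1000000

namespace SVGaux

-- counting the number of functions fixed off T
lemma fix_off_card {k m : ℕ} (c : Fin k → Fin m) (T : Finset (Fin k)) :
    ((univ : Finset (Fin k → Fin m)).filter fun v => ∀ i ∉ T, v i = c i).card
      ≤ m ^ T.card := by
  classical
  have h : ((univ : Finset (Fin k → Fin m)).filter fun v => ∀ i ∉ T, v i = c i).card
      ≤ (univ : Finset (T → Fin m)).card := by
    refine Finset.card_le_card_of_injOn (fun (v : Fin k → Fin m) (i : T) => v i.1)
      (fun a _ => mem_univ _) ?_
    intro v hv v' hv' he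
    simp only [coe_filter, Set.mem_setOf_eq, mem_univ, true_and] at hv hv'
    funext i
    by_cases hi : i ∈ T
    · exact congrFun he ⟨i, hi⟩
    · rw [hv i hi, hv' i hi]
  calc ((univ : Finset (Fin k → Fin m)).filter fun v => ∀ i ∉ T, v i = c i).card
      ≤ (univ : Finset (T → Fin m)).card := h
    _ = m ^ T.card := by
        simp [Finset.card_univ, Fintype.card_fun]

lemma ball_card_le {k m : ℕ} (hm : 1 ≤ m) (c : Fin k → Fin m) (s : ℕ) :
    ((univ : Finset (Fin k → Fin m)).filter fun v => hammingDist v c ≤ s).card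
      ≤ 2 ^ k * m ^ s := by
  have hsub : ((univ : Finset (Fin k → Fin m)).filter fun v => hammingDist v c ≤ s)
      ⊆ ((univ : Finset (Fin k)).powerset.filter fun T => T.card ≤ s).biUnion
        (fun T => univ.filter fun v => ∀ i ∉ T, v i = c i) := by
    intro v hv
    simp only [mem_filter, mem_univ, true_and] at hv
    refine mem_biUnion.2 ⟨univ.filter (fun i => v i ≠ c i), ?_, ?_⟩
    · simp only [mem_filter, mem_powerset, subset_univ, true_and]
      exact hv
    · simp only [mem_filter, mem_univ, true_and]
      intro i hi
      simpa using hi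
  refine le_trans (card_le_card hsub) (le_trans card_biUnion_le ?_)
  have h1 : ∑ T ∈ (univ : Finset (Fin k)).powerset.filter fun T => T.card ≤ s,
        ((univ : Finset (Fin k → Fin m)).filter fun v => ∀ i ∉ T, v i = c i).card
      ≤ ∑ T ∈ (univ : Finset (Fin k)).powerset.filter fun T => T.card ≤ s, m ^ s := by
    refine Finset.sum_le_sum fun T hT => ?_
    simp only [mem_filter] at hT
    exact le_trans (fix_off_card c T) (Nat.pow_le_pow_right hm hT.2)
  refine le_trans h1 ?_
  rw [Finset.sum_const, smul_eq_mul]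
  refine Nat.mul_le_mul_right _ ?_
  calc ((univ : Finset (Fin k)).powerset.filter fun T => T.card ≤ s).card
      ≤ (univ : Finset (Fin k)).powerset.card := card_le_card (filter_subset _ _)
    _ = 2 ^ k := by simp

lemma exists_code (k m r : ℕ) (hr : 1 ≤ r) (hm : 1 ≤ m) :
    ∃ C : Finset (Fin k → Fin m),
      (∀ u ∈ C, ∀ v ∈ C, u ≠ v → r ≤ hammingDist u v) ∧
      m ^ k ≤ C.card * (2 ^ k * m ^ (r - 1)) := by
  classical
  set P : Finset (Fin k → Fin m) → Prop :=
    fun C => ∀ u ∈ C, ∀ v ∈ C, u ≠ v → r ≤ hammingDist u v with hP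
  have hSne : ((univ : Finset (Finset (Fin k → Fin m))).filter P).Nonempty :=
    ⟨∅, by simp [hP]⟩
  obtain ⟨C, hCmem, hCmax⟩ := Finset.exists_max_image _ Finset.card hSne
  simp only [mem_filter, mem_univ, true_and] at hCmem
  refine ⟨C, hCmem, ?_⟩
  -- covering
  have hcov : (univ : Finset (Fin k → Fin m)) ⊆
      C.biUnion (fun c => univ.filter fun v => hammingDist v c ≤ r - 1) := by
    intro v _
    by_contra hv
    simp only [mem_biUnion, mem_filter, mem_univ, true_and, not_exists, not_and,
      not_le] at hv
    have hfar : ∀ c ∈ C, r ≤ hammingDist v c := by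
      intro c hc
      have := hv c hc
      omega
    have hvC : v ∉ C := by
      intro hvC
      have := hfar v hvC
      simp [hammingDist_self] at this
      omega
    have hP' : P (insert v C) := by
      intro a ha b hb hab
      rcases Finset.mem_insert.1 ha with ha | ha <;>
        rcases Finset.mem_insert.1 hb with hb | hb
      · exact absurd (ha.trans hb.symm) hab
      · rw [ha]
        exact hfar b hb
      · rw [hb, hammingDist_comm]
        exact hfar a ha
      · exact hCmem a ha b hb hab
    have hle := hCmax (insert v C) (mem_filter.2 ⟨mem_univ _, hP'⟩)
    rw [Finset.card_insert_of_notMem hvC] at hle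
    omega
  have hcount : m ^ k ≤ C.card * (2 ^ k * m ^ (r - 1)) := by
    calc m ^ k = (univ : Finset (Fin k → Fin m)).card := by
          simp [Finset.card_univ, Fintype.card_fun]
      _ ≤ (C.biUnion fun c => univ.filter fun v => hammingDist v c ≤ r - 1).card :=
          card_le_card hcov
      _ ≤ ∑ c ∈ C, (univ.filter fun v => hammingDist v c ≤ r - 1).card :=
          card_biUnion_le
      _ ≤ ∑ c ∈ C, 2 ^ k * m ^ (r - 1) :=
          Finset.sum_le_sum fun c _ => ball_card_le hm c (r - 1)
      _ = C.card * (2 ^ k * m ^ (r - 1)) := by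
          rw [Finset.sum_const, smul_eq_mul]
  exact hcount

variable {k d m : ℕ}

def enc (h : m * k ≤ d) (b : Fin k) (a : Fin m) : Fin d :=
  ⟨b * m + a, by
    have hb : (b : ℕ) + 1 ≤ k := b.2
    have ha : (a : ℕ) < m := a.2
    have : ((b : ℕ) + 1) * m ≤ k * m := Nat.mul_le_mul_right _ hb
    have h2 : k * m ≤ d := by rwa [Nat.mul_comm] at h
    calc (b : ℕ) * m + a < ((b : ℕ) + 1) * m := by nlinarith
      _ ≤ k * m := this
      _ ≤ d := h2⟩

lemma enc_inj (h : m * k ≤ d) {b b' : Fin k} {a a' : Fin m}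
    (he : enc h b a = enc h b' a') : b = b' ∧ a = a' := by
  have hv : (b : ℕ) * m + a = (b' : ℕ) * m + a' := congrArg Fin.val he
  have hm : 0 < m := lt_of_le_of_lt (Nat.zero_le _) a.2
  have ha : (a : ℕ) < m := a.2
  have ha' : (a' : ℕ) < m := a'.2
  have hmod : (a : ℕ) = (a' : ℕ) := by
    have h2 : ((b : ℕ) * m + a) % m = ((b' : ℕ) * m + a') % m := by rw [hv]
    rwa [Nat.mul_add_mod', Nat.mul_add_mod', Nat.mod_eq_of_lt ha,
      Nat.mod_eq_of_lt ha'] at h2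
  have hb : (b : ℕ) = (b' : ℕ) := by
    have hmm : (b : ℕ) * m = (b' : ℕ) * m := by omega
    exact Nat.eq_of_mul_eq_mul_right hm hmm
  exact ⟨Fin.ext hb, Fin.ext hmod⟩

def wvec (h : m * k ≤ d) (u : Fin k → Fin m) (j : Fin d) : Bool :=
  decide (∃ b, enc h b (u b) = j)

lemma wvec_support (h : m * k ≤ d) (u : Fin k → Fin m) :
    ((univ : Finset (Fin d)).filter fun j => wvec h u j = true).card = k := by
  have himg : ((univ : Finset (Fin d)).filter fun j => wvec h u j = true)
      = (univ : Finset (Fin k)).image (fun b => enc h b (u b)) := by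
    ext j
    simp [wvec, mem_image, eq_comm]
  rw [himg, Finset.card_image_of_injective _ ?_, Finset.card_univ, Fintype.card_fin]
  intro b b' hbb
  exact (enc_inj h hbb).1

lemma wvec_dist (h : m * k ≤ d) (u v : Fin k → Fin m) :
    2 * hammingDist u v ≤ hammingDist (wvec h u) (wvec h v) := by
  classical
  set B : Finset (Fin k) := univ.filter fun b => u b ≠ v b with hB
  set T : Finset (Fin d) := B.biUnion (fun b => {enc h b (u b), enc h b (v b)}) with hT
  have hTcard : T.card = 2 * B.card := by
    rw [hT, Finset.card_biUnion]
    · rw [Finset.sum_congr rfl (fun b hb => ?_), Finset.sum_const, smul_eq_mul,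
        Nat.mul_comm]
      have hne : u b ≠ v b := by
        rw [hB] at hb; simpa using hb
      have : enc h b (u b) ≠ enc h b (v b) := by
        intro hcon
        exact hne ((enc_inj h hcon).2)
      rw [Finset.card_insert_of_notMem (by simpa using this), Finset.card_singleton]
    · intro b _ b' _ hbb
      simp only [Finset.disjoint_left]
      intro x hx hx'
      simp only [mem_insert, mem_singleton] at hx hx'
      rcases hx with hx | hx <;> rcases hx' with hx' | hx' <;>
        exact hbb (by rw [hx] at hx'; exact (enc_inj h hx').1)
  have hsub : T ⊆ univ.filter fun j => wvec h u j ≠ wvec h v j := by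
    intro j hj
    rw [hT, mem_biUnion] at hj
    obtain ⟨b, hb, hj⟩ := hj
    have hne : u b ≠ v b := by rw [hB] at hb; simpa using hb
    simp only [mem_insert, mem_singleton] at hj
    simp only [mem_filter, mem_univ, true_and]
    rcases hj with hj | hj
    · subst hj
      have h1 : wvec h u (enc h b (u b)) = true := by
        simp only [wvec, decide_eq_true_eq]; exact ⟨b, rfl⟩
      have h2 : wvec h v (enc h b (u b)) = false := by
        simp only [wvec, decide_eq_false_iff_not, not_exists]
        intro b' hcon
        obtain ⟨hb1, hb2⟩ := enc_inj h hcon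
        subst hb1
        exact hne hb2.symm
      rw [h1, h2]; simp
    · subst hj
      have h1 : wvec h v (enc h b (v b)) = true := by
        simp only [wvec, decide_eq_true_eq]; exact ⟨b, rfl⟩
      have h2 : wvec h u (enc h b (v b)) = false := by
        simp only [wvec, decide_eq_false_iff_not, not_exists]
        intro b' hcon
        obtain ⟨hb1, hb2⟩ := enc_inj h hcon
        subst hb1
        exact hne hb2
      rw [h1, h2]; simp
  calc 2 * hammingDist u v = T.card := by rw [hTcard, hB]; rfl
    _ ≤ (univ.filter fun j => wvec h u j ≠ wvec h v j).card := card_le_card hsub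
    _ = hammingDist (wvec h u) (wvec h v) := rfl


end SVGaux

open SVGaux in
/-- Sparse Varshamov–Gilbert lemma: for `1 ≤ k ≤ d/8` there exist `M` binary vectors
in `{0,1}^d`, each with exactly `k` ones, pairwise at Hamming distance at least `k/2`,
with `log M ≥ (k/8) log(1 + d/(2k))`. -/
theorem sparse_varshamov_gilbert (k d : ℕ) (hk : 1 ≤ k) (hkd : 8 * k ≤ d) :
    ∃ M : ℕ, ∃ w : Fin M → Fin d → Bool,
      (∀ i j, i ≠ j → (k : ℝ) / 2 ≤ (hammingDist (w i) (w j) : ℝ)) ∧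
      ((k : ℝ) / 8 * Real.log (1 + (d : ℝ) / (2 * k)) ≤ Real.log (M : ℝ)) ∧
      (∀ j, (Finset.univ.filter fun i => w j i = true).card = k) := by
  classical
  have hk0 : 0 < k := hk
  set m := d / k with hmdef
  have hm8 : 8 ≤ m := (Nat.le_div_iff_mul_le hk0).2 hkd
  have h : m * k ≤ d := Nat.div_mul_le_self d k
  have hm1 : 1 ≤ m := by omega
  set r : ℕ := (k + 3) / 4 with hrdef
  obtain ⟨C, hC, hcount⟩ := SVGaux.exists_code k m r (by omega) hm1
  set M := C.card with hMdef
  set s : ℕ := r - 1 with hsdef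
  refine ⟨M, fun i => SVGaux.wvec h (C.equivFin.symm i).1,
    ?_, ?_, ?_⟩
  · -- pairwise distance
    intro i j hij
    set u : Fin k → Fin m := (C.equivFin.symm i).1 with hu
    set v : Fin k → Fin m := (C.equivFin.symm j).1 with hv
    have huv : u ≠ v := by
      intro hcon
      apply hij
      exact C.equivFin.symm.injective (Subtype.ext hcon)
    have hr : r ≤ hammingDist u v :=
      hC u (C.equivFin.symm i).2 v (C.equivFin.symm j).2 huv
    have h2 : 2 * hammingDist u v ≤ hammingDist (wvec h u) (wvec h v) :=
      SVGaux.wvec_dist h u v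
    have hnat : k ≤ 2 * hammingDist (wvec h u) (wvec h v) := by
      have h4r : k ≤ 4 * r := by omega
      omega
    have : (k : ℝ) ≤ 2 * (hammingDist (wvec h u) (wvec h v) : ℝ) := by
      exact_mod_cast hnat
    linarith
  · -- log bound
    have hM0 : 0 < M := by
      by_contra hM
      have hM' : M = 0 := by omega
      rw [hM'] at hcount
      have hmk1 : 1 ≤ m ^ k := Nat.one_le_pow _ _ (by omega)
      simp at hcount
      omega
    have hcast : (m : ℝ) ^ k ≤ (M : ℝ) * (2 ^ k * (m : ℝ) ^ s) := by
      exact_mod_cast hcount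
    have hmpos : (0 : ℝ) < m := by positivity
    have hMpos : (0 : ℝ) < M := by exact_mod_cast hM0
    set L : ℝ := Real.log m with hL
    set l2 : ℝ := Real.log 2 with hl2
    have hl2pos : 0 < l2 := Real.log_pos (by norm_num)
    have hLge : 3 * l2 ≤ L := by
      have h8 : ((8 : ℕ) : ℝ) ≤ (m : ℝ) := by exact_mod_cast hm8
      have : Real.log 8 ≤ L := Real.log_le_log (by norm_num) (by norm_num at h8 ⊢; linarith)
      have h83 : Real.log 8 = 3 * l2 := by
        rw [show (8 : ℝ) = 2 ^ 3 by norm_num, Real.log_pow, hl2]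
        push_cast; ring
      linarith
    have hLpos : 0 < L := by linarith
    have hlogle : (k : ℝ) * L ≤ Real.log M + ((k : ℝ) * l2 + (s : ℝ) * L) := by
      have h1 : Real.log ((m : ℝ) ^ k) ≤ Real.log ((M : ℝ) * (2 ^ k * (m : ℝ) ^ s)) :=
        Real.log_le_log (by positivity) hcast
      rw [Real.log_pow, Real.log_mul (by positivity) (by positivity),
        Real.log_mul (by positivity) (by positivity), Real.log_pow, Real.log_pow] at h1
      linarith
    have hs4 : ((s : ℝ)) * 4 ≤ k := by
      have : 4 * s ≤ k := by omega
      exact_mod_cast by linarith [this]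
    have hkR : (1 : ℝ) ≤ k := by exact_mod_cast hk
    -- log(1 + d/(2k)) ≤ L
    have hdnat : d + 2 * k ≤ 2 * (k * m) := by
      have hdm : k * m + d % k = d := by rw [hmdef]; exact Nat.div_add_mod d k
      have hmod : d % k < k := Nat.mod_lt _ hk0
      have h2 : 8 * k ≤ k * m := by
        calc 8 * k = k * 8 := by ring
          _ ≤ k * m := Nat.mul_le_mul_left _ hm8
      omega
    have hlog1 : Real.log (1 + (d : ℝ) / (2 * k)) ≤ L := by
      have h2k : (0 : ℝ) < 2 * k := by positivity
      have hdR : (d : ℝ) + 2 * k ≤ 2 * (k * m) := by exact_mod_cast hdnat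
      have hdiv : (d : ℝ) / (2 * k) ≤ (m : ℝ) - 1 := by
        rw [div_le_iff₀ h2k]
        nlinarith
      refine Real.log_le_log (by positivity) (by linarith)
    have hfin : (k : ℝ) / 8 * L ≤ Real.log M := by
      have e1 : 0 ≤ (k : ℝ) * (L - 3 * l2) := by
        apply mul_nonneg (by positivity)
        linarith
      have e2 : 0 ≤ ((k : ℝ) - 4 * s) * L := by
        apply mul_nonneg (by linarith) (le_of_lt hLpos)
      nlinarith
    calc (k : ℝ) / 8 * Real.log (1 + (d : ℝ) / (2 * k))
        ≤ (k : ℝ) / 8 * L := by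
          apply mul_le_mul_of_nonneg_left hlog1 (by positivity)
      _ ≤ Real.log M := hfin
  · intro j
    exact SVGaux.wvec_support h _
end

section
/- (Davis–Kahan sin(θ) theorem for leading eigenvectors.) Let A, B be two d×d real symmetric positive semidefinite matrices with eigenvalue–eigenvector pairs (λ₁, u₁), …, (λ_d, u_d) for A and (μ₁, v₁), …, (μ_d, v_d) for B, ordered so that λ₁ ≥ λ₂ ≥ … and μ₁ ≥ μ₂ ≥ …, with all eigenvectors of unit norm. Assume max(λ₁ − λ₂, μ₁ − μ₂) > 0. Then sin(∠(u₁, v₁)) ≤ 2‖A − B‖_op / max(λ₁ − λ₂, μ₁ − μ₂), where ∠(u, v) = arccos(|uᵀv|) is the principal angle. Moreover, min_{ε ∈ {±1}} |ε u₁ − v₁|₂² ≤ 2 sin²(∠(u₁, v₁)). -/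
open Matrix

/-- The operator (spectral) norm of a matrix. -/
noncomputable def opNorm {d : ℕ} (A : Matrix (Fin d) (Fin d) ℝ) : ℝ :=
  ⨆ v : {v : Fin d → ℝ // ∑ a, v a ^ 2 ≤ 1},
    Real.sqrt (∑ a, (A.mulVec (v : Fin d → ℝ) a) ^ 2)

lemma opNorm_bdd {n : ℕ} (M : Matrix (Fin n) (Fin n) ℝ) :
    BddAbove (Set.range fun v : {v : Fin n → ℝ // ∑ a, v a ^ 2 ≤ 1} =>
      Real.sqrt (∑ a, (M.mulVec (v : Fin n → ℝ) a) ^ 2)) := by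
  refine ⟨Real.sqrt (∑ a, ∑ b, M a b ^ 2), ?_⟩
  rintro x ⟨⟨w, hw⟩, rfl⟩
  apply Real.sqrt_le_sqrt
  refine Finset.sum_le_sum fun a _ => ?_
  calc (M.mulVec w a) ^ 2 = (∑ b, M a b * w b) ^ 2 := by rfl
    _ ≤ (∑ b, M a b ^ 2) * ∑ b, w b ^ 2 := Finset.sum_mul_sq_le_sq_mul_sq _ _ _
    _ ≤ (∑ b, M a b ^ 2) * 1 := by
        refine mul_le_mul_of_nonneg_left hw (Finset.sum_nonneg fun b _ => sq_nonneg _)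
    _ = ∑ b, M a b ^ 2 := mul_one _

lemma opNorm_nonneg {n : ℕ} (M : Matrix (Fin n) (Fin n) ℝ) : 0 ≤ opNorm M := by
  have h := le_ciSup (opNorm_bdd M) ⟨0, by simp⟩
  calc (0:ℝ) ≤ Real.sqrt (∑ a, (M.mulVec (0 : Fin n → ℝ) a) ^ 2) := Real.sqrt_nonneg _
    _ ≤ opNorm M := h

lemma sum_sq_mulVec_le {n : ℕ} (M : Matrix (Fin n) (Fin n) ℝ) (x : Fin n → ℝ)
    (hx : ∑ a, x a ^ 2 ≤ 1) : ∑ a, (M.mulVec x a) ^ 2 ≤ opNorm M ^ 2 := by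
  have h := le_ciSup (opNorm_bdd M) ⟨x, hx⟩
  have h2 : Real.sqrt (∑ a, (M.mulVec x a) ^ 2) ≤ opNorm M := h
  have h3 : Real.sqrt (∑ a, (M.mulVec x a) ^ 2) ^ 2 = ∑ a, (M.mulVec x a) ^ 2 :=
    Real.sq_sqrt (Finset.sum_nonneg fun a _ => sq_nonneg (M.mulVec x a))
  nlinarith [Real.sqrt_nonneg (∑ a, (M.mulVec x a) ^ 2)]

lemma opNorm_neg_sub {n : ℕ} (A B : Matrix (Fin n) (Fin n) ℝ) :
    opNorm (B - A) = opNorm (A - B) := by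
  unfold opNorm
  congr 1
  funext w
  congr 1
  refine Finset.sum_congr rfl fun a _ => ?_
  have : (B - A).mulVec (w : Fin n → ℝ) a = -((A - B).mulVec (w : Fin n → ℝ) a) := by
    have : (B - A) = -(A - B) := by abel
    rw [this, Matrix.neg_mulVec]; rfl
  rw [this]; ring
open Matrix
lemma parseval {n : ℕ} (u : Fin n → Fin n → ℝ)
    (hu : ∀ i j, u i ⬝ᵥ u j = if i = j then (1 : ℝ) else 0)
    (x y : Fin n → ℝ) : ∑ i, (u i ⬝ᵥ x) * (u i ⬝ᵥ y) = x ⬝ᵥ y := by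
  set U : Matrix (Fin n) (Fin n) ℝ := Matrix.of u with hU
  have h1 : U * Uᵀ = 1 := by
    ext i j
    simpa [hU, Matrix.mul_apply, dotProduct, Matrix.one_apply] using hu i j
  have h2 : Uᵀ * U = 1 := mul_eq_one_comm.mp h1
  have key : ∀ z : Fin n → ℝ, Uᵀ.mulVec (U.mulVec z) = z := by
    intro z
    rw [Matrix.mulVec_mulVec, h2, Matrix.one_mulVec]
  have hx : ∀ i (z : Fin n → ℝ), u i ⬝ᵥ z = U.mulVec z i := fun i z => rfl
  calc ∑ i, (u i ⬝ᵥ x) * (u i ⬝ᵥ y) = (U.mulVec x) ⬝ᵥ (U.mulVec y) := by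
        rfl
    _ = Uᵀ.mulVec (U.mulVec x) ⬝ᵥ y := by
        rw [Matrix.dotProduct_mulVec, Matrix.mulVec_transpose]
    _ = x ⬝ᵥ y := by rw [key]


lemma key_dk {d : ℕ} (A B : Matrix (Fin (d + 2)) (Fin (d + 2)) ℝ)
    (hA : Aᵀ = A) (hB : Bᵀ = B)
    (lam mu : Fin (d + 2) → ℝ) (u v : Fin (d + 2) → Fin (d + 2) → ℝ)
    (hu : ∀ i j, u i ⬝ᵥ u j = if i = j then (1 : ℝ) else 0)
    (hv : ∀ i j, v i ⬝ᵥ v j = if i = j then (1 : ℝ) else 0)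
    (hAu : ∀ i, A.mulVec (u i) = lam i • u i)
    (hBv : ∀ i, B.mulVec (v i) = mu i • v i)
    (hlam : Antitone lam) (hmu : Antitone mu)
    (hd : 0 < lam 0 - lam 1) :
    Real.sin (Real.arccos |u 0 ⬝ᵥ v 0|) ≤ 2 * opNorm (A - B) / (lam 0 - lam 1) := by
  set E := opNorm (A - B) with hE
  have hE0 : 0 ≤ E := opNorm_nonneg _
  set δ := lam 0 - lam 1 with hδ
  set c := u 0 ⬝ᵥ v 0 with hc
  -- basic norms
  have sumsq : ∀ x : Fin (d + 2) → ℝ, ∑ a, x a ^ 2 = x ⬝ᵥ x := fun x =>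
    Finset.sum_congr rfl fun a _ => pow_two (x a)
  have hu00 : u 0 ⬝ᵥ u 0 = 1 := by simpa using hu 0 0
  have hv00 : v 0 ⬝ᵥ v 0 = 1 := by simpa using hv 0 0
  have hun : ∑ a, u 0 a ^ 2 = 1 := by rw [sumsq, hu00]
  have hvn : ∑ a, v 0 a ^ 2 = 1 := by rw [sumsq, hv00]
  -- Parseval for coordinates of v 0 in u basis
  have hPa : ∑ i, (u i ⬝ᵥ v 0) ^ 2 = 1 := by
    rw [← hv00, ← parseval u hu (v 0) (v 0)]
    exact Finset.sum_congr rfl fun i _ => pow_two _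
  have hc2 : c ^ 2 ≤ 1 := by
    rw [← hPa]
    exact Finset.single_le_sum (f := fun i => (u i ⬝ᵥ v 0) ^ 2)
      (fun i _ => sq_nonneg _) (Finset.mem_univ 0)
  -- symmetry helpers
  have hsymA : ∀ i (x : Fin (d + 2) → ℝ), u i ⬝ᵥ A.mulVec x = lam i * (u i ⬝ᵥ x) := by
    intro i x
    rw [Matrix.dotProduct_mulVec, ← Matrix.mulVec_transpose, hA, hAu i, smul_dotProduct]
    rfl
  have hsymB : ∀ i (x : Fin (d + 2) → ℝ), v i ⬝ᵥ B.mulVec x = mu i * (v i ⬝ᵥ x) := by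
    intro i x
    rw [Matrix.dotProduct_mulVec, ← Matrix.mulVec_transpose, hB, hBv i, smul_dotProduct]
    rfl
  -- Weyl: mu 0 ≥ lam 0 - E
  have weyl : lam 0 - E ≤ mu 0 := by
    have uAu : u 0 ⬝ᵥ A.mulVec (u 0) = lam 0 := by
      rw [hAu 0, dotProduct_smul, hu00]; simp
    have uBu : u 0 ⬝ᵥ B.mulVec (u 0) ≤ mu 0 := by
      have h1 : u 0 ⬝ᵥ B.mulVec (u 0) = ∑ i, mu i * (v i ⬝ᵥ u 0) ^ 2 := by
        rw [← parseval v hv (u 0) (B.mulVec (u 0))]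
        refine Finset.sum_congr rfl fun i _ => ?_
        rw [hsymB i (u 0)]; ring
      have h2 : ∑ i, (v i ⬝ᵥ u 0) ^ 2 = 1 := by
        rw [← hu00, ← parseval v hv (u 0) (u 0)]
        exact Finset.sum_congr rfl fun i _ => pow_two _
      rw [h1]
      calc ∑ i, mu i * (v i ⬝ᵥ u 0) ^ 2 ≤ ∑ i, mu 0 * (v i ⬝ᵥ u 0) ^ 2 := by
            refine Finset.sum_le_sum fun i _ => ?_
            exact mul_le_mul_of_nonneg_right (hmu (Fin.zero_le i)) (sq_nonneg _)
        _ = mu 0 := by rw [← Finset.mul_sum, h2, mul_one]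
    have hEbound : u 0 ⬝ᵥ (A - B).mulVec (u 0) ≤ E := by
      have hcs : (u 0 ⬝ᵥ (A - B).mulVec (u 0)) ^ 2 ≤ E ^ 2 := by
        calc (u 0 ⬝ᵥ (A - B).mulVec (u 0)) ^ 2
            ≤ (∑ a, u 0 a ^ 2) * ∑ a, ((A - B).mulVec (u 0) a) ^ 2 :=
              Finset.sum_mul_sq_le_sq_mul_sq _ _ _
          _ = ∑ a, ((A - B).mulVec (u 0) a) ^ 2 := by rw [hun, one_mul]
          _ ≤ E ^ 2 := sum_sq_mulVec_le _ _ (le_of_eq hun)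
      nlinarith
    have : u 0 ⬝ᵥ (A - B).mulVec (u 0) = u 0 ⬝ᵥ A.mulVec (u 0) - u 0 ⬝ᵥ B.mulVec (u 0) := by
      rw [Matrix.sub_mulVec, dotProduct_sub]
    linarith [hEbound, this ▸ hEbound]
  -- residual bound
  have hS : ∑ i, ((lam i - mu 0) * (u i ⬝ᵥ v 0)) ^ 2 ≤ E ^ 2 := by
    have hw : ∀ i, u i ⬝ᵥ (A - B).mulVec (v 0) = (lam i - mu 0) * (u i ⬝ᵥ v 0) := by
      intro i
      rw [Matrix.sub_mulVec, dotProduct_sub, hsymA i (v 0), hBv 0, dotProduct_smul,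
        smul_eq_mul]
      ring
    calc ∑ i, ((lam i - mu 0) * (u i ⬝ᵥ v 0)) ^ 2
        = ∑ i, (u i ⬝ᵥ (A - B).mulVec (v 0)) ^ 2 := by
          exact Finset.sum_congr rfl fun i _ => by rw [hw i]
      _ = ∑ i, (u i ⬝ᵥ (A - B).mulVec (v 0)) * (u i ⬝ᵥ (A - B).mulVec (v 0)) :=
          Finset.sum_congr rfl fun i _ => pow_two _
      _ = (A - B).mulVec (v 0) ⬝ᵥ (A - B).mulVec (v 0) :=
          parseval u hu ((A - B).mulVec (v 0)) ((A - B).mulVec (v 0))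
      _ = ∑ a, ((A - B).mulVec (v 0) a) ^ 2 := (sumsq _).symm
      _ ≤ E ^ 2 := sum_sq_mulVec_le _ _ (le_of_eq hvn)
  rw [Real.sin_arccos, sq_abs]
  rcases le_or_gt δ (2 * E) with hcase | hcase
  · calc Real.sqrt (1 - c ^ 2) ≤ 1 := by
          exact Real.sqrt_le_one.mpr (by nlinarith [sq_nonneg c])
      _ ≤ 2 * E / δ := (one_le_div hd).mpr hcase
  · -- gap case
    have hstep : ∀ i : Fin (d + 2), i ≠ 0 → δ / 2 ≤ mu 0 - lam i := by
      intro i hi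
      have h1i : (1 : Fin (d + 2)) ≤ i := by
        rw [Fin.le_def]
        have : i.val ≠ 0 := fun h => hi (Fin.ext (by simpa using h))
        have h1 : ((1 : Fin (d + 2)) : ℕ) = 1 := rfl
        omega
      have := hlam h1i
      linarith [weyl]
    have hmain : δ ^ 2 * (1 - c ^ 2) ≤ 4 * E ^ 2 := by
      have h1c : 1 - c ^ 2 = ∑ i ∈ Finset.univ.erase 0, (u i ⬝ᵥ v 0) ^ 2 := by
        have := Finset.add_sum_erase Finset.univ (fun i => (u i ⬝ᵥ v 0) ^ 2) (Finset.mem_univ 0)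
        rw [← hPa]
        simp only [← this, hc]
        ring
      calc δ ^ 2 * (1 - c ^ 2)
          = ∑ i ∈ Finset.univ.erase 0, δ ^ 2 * (u i ⬝ᵥ v 0) ^ 2 := by
            rw [h1c, Finset.mul_sum]
        _ ≤ ∑ i ∈ Finset.univ.erase 0, 4 * ((lam i - mu 0) * (u i ⬝ᵥ v 0)) ^ 2 := by
            refine Finset.sum_le_sum fun i hi => ?_
            have h2 := hstep i (Finset.ne_of_mem_erase hi)
            have h3 : δ ^ 2 ≤ 4 * (lam i - mu 0) ^ 2 := by nlinarith
            rw [mul_pow, ← mul_assoc]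
            exact mul_le_mul_of_nonneg_right h3 (sq_nonneg _)
        _ ≤ ∑ i, 4 * ((lam i - mu 0) * (u i ⬝ᵥ v 0)) ^ 2 :=
            Finset.sum_le_sum_of_subset_of_nonneg (Finset.erase_subset _ _)
              (fun i _ _ => by positivity)
        _ = 4 * ∑ i, ((lam i - mu 0) * (u i ⬝ᵥ v 0)) ^ 2 := by
            rw [Finset.mul_sum]
        _ ≤ 4 * E ^ 2 := by linarith [hS]
    have htarget : 1 - c ^ 2 ≤ (2 * E / δ) ^ 2 := by
      rw [div_pow, le_div_iff₀ (by positivity)]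
      nlinarith [hmain]
    calc Real.sqrt (1 - c ^ 2) ≤ Real.sqrt ((2 * E / δ) ^ 2) := Real.sqrt_le_sqrt htarget
      _ = 2 * E / δ := Real.sqrt_sq (by positivity)

/-- Davis–Kahan `sin θ` theorem for leading eigenvectors of PSD matrices:
`sin ∠(u₁, v₁) ≤ 2‖A − B‖_op / max(λ₁ − λ₂, μ₁ − μ₂)`, and
`min_{ε = ±1} |ε u₁ − v₁|₂² ≤ 2 sin² ∠(u₁, v₁)`. -/
theorem davis_kahan_sin_theta
    {d : ℕ}
    (A B : Matrix (Fin (d + 2)) (Fin (d + 2)) ℝ)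
    (hA : A.PosSemidef) (hB : B.PosSemidef)
    (lam mu : Fin (d + 2) → ℝ) (u v : Fin (d + 2) → Fin (d + 2) → ℝ)
    (hu : ∀ i j, u i ⬝ᵥ u j = if i = j then (1 : ℝ) else 0)
    (hv : ∀ i j, v i ⬝ᵥ v j = if i = j then (1 : ℝ) else 0)
    (hAu : ∀ i, A.mulVec (u i) = lam i • u i)
    (hBv : ∀ i, B.mulVec (v i) = mu i • v i)
    (hlam : Antitone lam) (hmu : Antitone mu)
    (hgap : 0 < max (lam 0 - lam 1) (mu 0 - mu 1)) :
    Real.sin (Real.arccos |u 0 ⬝ᵥ v 0|) ≤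
        2 * opNorm (A - B) / max (lam 0 - lam 1) (mu 0 - mu 1) ∧
      min (∑ a, (u 0 a - v 0 a) ^ 2) (∑ a, (-u 0 a - v 0 a) ^ 2) ≤
        2 * Real.sin (Real.arccos |u 0 ⬝ᵥ v 0|) ^ 2 := by
  have hAsym : Aᵀ = A := by
    ext i j
    have := congrFun (congrFun hA.1 i) j
    simpa [Matrix.conjTranspose_apply] using this
  have hBsym : Bᵀ = B := by
    ext i j
    have := congrFun (congrFun hB.1 i) j
    simpa [Matrix.conjTranspose_apply] using this
  have sumsq : ∀ x : Fin (d + 2) → ℝ, ∑ a, x a ^ 2 = x ⬝ᵥ x := fun x =>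
    Finset.sum_congr rfl fun a _ => pow_two (x a)
  have hu00 : u 0 ⬝ᵥ u 0 = 1 := by simpa using hu 0 0
  have hv00 : v 0 ⬝ᵥ v 0 = 1 := by simpa using hv 0 0
  have hun : ∑ a, u 0 a ^ 2 = 1 := by rw [sumsq, hu00]
  have hvn : ∑ a, v 0 a ^ 2 = 1 := by rw [sumsq, hv00]
  set c := u 0 ⬝ᵥ v 0 with hc
  have hcsum : c = ∑ a, u 0 a * v 0 a := rfl
  have hc2 : c ^ 2 ≤ 1 := by
    have h := Finset.sum_mul_sq_le_sq_mul_sq Finset.univ (u 0) (v 0)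
    rw [hun, hvn] at h
    simpa [← hcsum] using h
  constructor
  · rcases le_total (mu 0 - mu 1) (lam 0 - lam 1) with h | h
    · rw [max_eq_left h]
      rw [max_eq_left h] at hgap
      exact key_dk A B hAsym hBsym lam mu u v hu hv hAu hBv hlam hmu hgap
    · rw [max_eq_right h]
      rw [max_eq_right h] at hgap
      have hk := key_dk B A hBsym hAsym mu lam v u hv hu hBv hAu hmu hlam hgap
      rw [dotProduct_comm, opNorm_neg_sub] at hk
      exact hk
  · -- second part
    have hcabs : |c| ≤ 1 := by nlinarith [sq_abs c, abs_nonneg c]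
    have hsin : Real.sin (Real.arccos |c|) ^ 2 = 1 - c ^ 2 := by
      rw [Real.sin_arccos, sq_abs, Real.sq_sqrt (by linarith : (0:ℝ) ≤ 1 - c ^ 2)]
    have h1 : ∑ a, (u 0 a - v 0 a) ^ 2 = 2 - 2 * c := by
      have e : ∀ a, (u 0 a - v 0 a) ^ 2 = u 0 a ^ 2 + v 0 a ^ 2 - 2 * (u 0 a * v 0 a) :=
        fun a => by ring
      rw [Finset.sum_congr rfl fun a _ => e a]
      rw [Finset.sum_sub_distrib, Finset.sum_add_distrib, hun, hvn, ← Finset.mul_sum, ← hcsum]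
      ring
    have h2 : ∑ a, (-u 0 a - v 0 a) ^ 2 = 2 + 2 * c := by
      have e : ∀ a, (-u 0 a - v 0 a) ^ 2 = u 0 a ^ 2 + v 0 a ^ 2 + 2 * (u 0 a * v 0 a) :=
        fun a => by ring
      rw [Finset.sum_congr rfl fun a _ => e a]
      rw [Finset.sum_add_distrib, Finset.sum_add_distrib, hun, hvn, ← Finset.mul_sum, ← hcsum]
      ring
    rw [h1, h2, hsin]
    rcases le_total 0 c with hc0 | hc0
    · refine le_trans (min_le_left _ _) ?_
      have hc1 : c ≤ 1 := by nlinarith [sq_nonneg (c - 1)]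
      nlinarith [mul_nonneg hc0 (sub_nonneg.mpr hc1)]
    · refine le_trans (min_le_right _ _) ?_
      have hc1 : -1 ≤ c := by nlinarith [sq_nonneg (c + 1)]
      nlinarith [mul_nonneg (neg_nonneg.mpr hc0) (sub_nonneg.mpr (neg_le_iff_add_nonneg.mp hc1))]
end
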